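/- For all z₁, z₂ > 0 and every t > 0, the two convolutions agree: ∫_0^t g₊(x; z₁) · g₊(t - x; z₂) dx = ∫_0^t g₊(x; 0) · g₊(t - x; z₁ + z₂) dx; i.e., the sum of two independent generalized inverse Gaussian random variables with parameters (1, z₁², 1/2) and (1, z₂², 1/2) has the same distribution as the sum of an independent chi-square random variable with one degree of freedom and a generalized inverse Gaussian random variable with parameters (1, (z₁+z₂)², 1/2). -/

import Mathlib

/-- The generalized inverse Gaussian density with parameters `(ψ, χ, λ) = (1, z², +1/2)`:
`g₊(x; z) = (e^z / √(2π)) x^{-1/2} exp(-z²/(2x) - x/2)`.  At `z = 0` this is the chi-square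
density with one degree of freedom. -/
noncomputable def gigPlus (z x : ℝ) : ℝ :=
  Real.exp z / Real.sqrt (2 * Real.pi) * x ^ (-(1 : ℝ) / 2) *
    Real.exp (-z ^ 2 / (2 * x) - x / 2)

open MeasureTheory Real Set


noncomputable def qf (c x : ℝ) : ℝ := (Real.sqrt x)⁻¹ * Real.exp (-c^2/(2*x))
noncomputable def lf (a x : ℝ) : ℝ := a * ((Real.sqrt x)⁻¹ * x⁻¹) * Real.exp (-a^2/(2*x))

/-- substitution function, with sign ε = 1 or -1 -/
noncomputable def sub_f (a b s x : ℝ) : ℝ :=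
  a * (Real.sqrt (s - x) / Real.sqrt x) + b * (Real.sqrt x / Real.sqrt (s - x))

noncomputable def Af (a s x : ℝ) : ℝ := a / (x * Real.sqrt x * Real.sqrt (s - x))
noncomputable def Bf (b s x : ℝ) : ℝ := b / ((s - x) * Real.sqrt (s - x) * Real.sqrt x)
noncomputable def Ef (a b s x : ℝ) : ℝ := Real.exp (-a^2/(2*x) - b^2/(2*(s-x)))

lemma hasDerivAt_sub_f {a b s x : ℝ} (hx : x ∈ Ioo 0 s) :
    HasDerivAt (sub_f a b s) (-(s/2) * (Af a s x - Bf b s x)) x := by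
  obtain ⟨hx0, hxs⟩ := hx
  have hsx : 0 < s - x := by linarith
  have hp : 0 < Real.sqrt x := Real.sqrt_pos.2 hx0
  have hq : 0 < Real.sqrt (s - x) := Real.sqrt_pos.2 hsx
  have hp2 : Real.sqrt x * Real.sqrt x = x := Real.mul_self_sqrt hx0.le
  have hq2 : Real.sqrt (s - x) * Real.sqrt (s - x) = s - x := Real.mul_self_sqrt hsx.le
  have d1 : HasDerivAt (fun y : ℝ => Real.sqrt y) (1 / (2 * Real.sqrt x)) x :=
    Real.hasDerivAt_sqrt hx0.ne'
  have d2 : HasDerivAt (fun y : ℝ => Real.sqrt (s - y)) (-(1 / (2 * Real.sqrt (s - x)))) x := by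
    have := (Real.hasDerivAt_sqrt hsx.ne').comp x (((hasDerivAt_id x).const_sub s))
    simpa [Function.comp_def] using this
  have d3 : HasDerivAt (fun y : ℝ => Real.sqrt (s - y) / Real.sqrt y)
      (((-(1 / (2 * Real.sqrt (s - x)))) * Real.sqrt x -
        Real.sqrt (s - x) * (1 / (2 * Real.sqrt x))) / (Real.sqrt x) ^ 2) x :=
    d2.div d1 hp.ne'
  have d4 : HasDerivAt (fun y : ℝ => Real.sqrt y / Real.sqrt (s - y))
      ((1 / (2 * Real.sqrt x) * Real.sqrt (s - x) -
        Real.sqrt x * (-(1 / (2 * Real.sqrt (s - x))))) / (Real.sqrt (s - x)) ^ 2) x :=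
    d1.div d2 hq.ne'
  have := (d3.const_mul a).add (d4.const_mul b)
  refine this.congr_deriv ?_
  symm
  unfold Af Bf
  set p := Real.sqrt x with hpd
  set q := Real.sqrt (s - x) with hqd
  rw [← hp2, show s = p * p + q * q by rw [hp2, hq2]; ring]
  have hx' : p * p + q * q - p * p = q * q := by ring
  rw [hx']
  field_simp
  ring

lemma sub_f_sq {a c s x : ℝ} (hx : x ∈ Ioo 0 s) :
    (sub_f a c s x) ^ 2 + (a - c) ^ 2 = s * (a ^ 2 / x + c ^ 2 / (s - x)) := by
  obtain ⟨hx0, hxs⟩ := hx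
  have hsx : 0 < s - x := by linarith
  have hp : 0 < Real.sqrt x := Real.sqrt_pos.2 hx0
  have hq : 0 < Real.sqrt (s - x) := Real.sqrt_pos.2 hsx
  have hp2 : Real.sqrt x * Real.sqrt x = x := Real.mul_self_sqrt hx0.le
  have hq2 : Real.sqrt (s - x) * Real.sqrt (s - x) = s - x := Real.mul_self_sqrt hsx.le
  unfold sub_f
  set p := Real.sqrt x
  set q := Real.sqrt (s - x)
  rw [← hp2, show s = p * p + q * q by rw [hp2, hq2]; ring,
    show p * p + q * q - p * p = q * q by ring]
  field_simp
  ring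

lemma sub_f_strictAntiOn {a c s : ℝ} {D : Set ℝ} (hD : Convex ℝ D) (hDs : D ⊆ Ioo 0 s)
    (hpos : ∀ x ∈ D, 0 < Af a s x - Bf c s x) : StrictAntiOn (sub_f a c s) D := by
  apply strictAntiOn_of_deriv_neg hD
  · intro x hx
    exact ((hasDerivAt_sub_f (hDs hx)).continuousAt).continuousWithinAt
  · intro x hx
    have hx' := interior_subset hx
    rw [(hasDerivAt_sub_f (hDs hx')).deriv]
    have hs : 0 < s := (hDs hx').1.trans (hDs hx').2
    nlinarith [hpos x hx']

lemma sub_f_strictMonoOn {a c s : ℝ} {D : Set ℝ} (hD : Convex ℝ D) (hDs : D ⊆ Ioo 0 s)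
    (hpos : ∀ x ∈ D, Af a s x - Bf c s x < 0) : StrictMonoOn (sub_f a c s) D := by
  apply strictMonoOn_of_deriv_pos hD
  · intro x hx
    exact ((hasDerivAt_sub_f (hDs hx)).continuousAt).continuousWithinAt
  · intro x hx
    have hx' := interior_subset hx
    rw [(hasDerivAt_sub_f (hDs hx')).deriv]
    have hs : 0 < s := (hDs hx').1.trans (hDs hx').2
    nlinarith [hpos x hx']

lemma sub_f_at {a c s r : ℝ} (hs : 0 < s) (hr : 0 < r) :
    sub_f a c s (s / (1 + r ^ 2)) = a * r + c / r := by
  set x := s / (1 + r ^ 2) with hxd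
  have h1 : (0:ℝ) < 1 + r ^ 2 := by positivity
  have hx0 : 0 < x := by positivity
  have hsx : s - x = s * r ^ 2 / (1 + r ^ 2) := by rw [hxd]; field_simp; ring
  have hsx0 : 0 < s - x := by rw [hsx]; positivity
  have hratio : (s - x) / x = r ^ 2 := by rw [hsx, hxd]; field_simp
  have hratio2 : x / (s - x) = (r ^ 2)⁻¹ := by rw [hsx, hxd]; field_simp
  have e1 : Real.sqrt (s - x) / Real.sqrt x = r := by
    rw [← Real.sqrt_div hsx0.le, hratio, Real.sqrt_sq hr.le]
  have e2 : Real.sqrt x / Real.sqrt (s - x) = r⁻¹ := by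
    rw [← Real.sqrt_div hx0.le, hratio2, Real.sqrt_inv, Real.sqrt_sq hr.le]
  unfold sub_f
  rw [e1, e2]
  ring

lemma mem_Ioo_of_r {s r : ℝ} (hs : 0 < s) (hr : 0 < r) : s / (1 + r ^ 2) ∈ Ioo 0 s := by
  constructor
  · positivity
  · rw [div_lt_iff₀ (by positivity)]
    nlinarith [mul_pos hs (mul_pos hr hr)]

lemma image_sub_f_neg {a b s : ℝ} (ha : 0 < a) (hb : 0 < b) (hs : 0 < s) :
    sub_f a (-b) s '' Ioo 0 s = univ := by
  apply eq_univ_of_forall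
  intro y
  set D := Real.sqrt (y ^ 2 + 4 * a * b) with hDd
  have hD2 : D ^ 2 = y ^ 2 + 4 * a * b := Real.sq_sqrt (by positivity)
  have hDy : -y < D := by
    nlinarith [Real.sqrt_nonneg (y ^ 2 + 4 * a * b), abs_nonneg y, sq_abs y,
      neg_abs_le y]
  set r := (y + D) / (2 * a) with hrd
  have hr : 0 < r := by
    rw [hrd]
    apply div_pos (by linarith) (by positivity)
  refine ⟨s / (1 + r ^ 2), mem_Ioo_of_r hs hr, ?_⟩
  rw [sub_f_at hs hr]
  have : a * r ^ 2 - y * r - b = 0 := by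
    rw [hrd]
    field_simp
    nlinarith [hD2]
  field_simp
  nlinarith [this, hr]

lemma image_sub_f_zero {a s : ℝ} (ha : 0 < a) (hs : 0 < s) :
    sub_f a 0 s '' Ioo 0 s = Ioi 0 := by
  apply Subset.antisymm
  · rintro _ ⟨x, hx, rfl⟩
    have hp : 0 < Real.sqrt x := Real.sqrt_pos.2 hx.1
    have hq : 0 < Real.sqrt (s - x) := Real.sqrt_pos.2 (by linarith [hx.2])
    have : 0 < sub_f a 0 s x := by
      unfold sub_f
      positivity
    exact this
  · intro y hy
    have hy0 : 0 < y := hy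
    have hr : 0 < y / a := by positivity
    refine ⟨s / (1 + (y / a) ^ 2), mem_Ioo_of_r hs hr, ?_⟩
    rw [sub_f_at hs hr]
    field_simp
    ring

lemma sub_f_gt {a b s x : ℝ} (ha : 0 < a) (hb : 0 < b) (hx : x ∈ Ioo 0 s)
    (hne : a * (s - x) ≠ b * x) : 2 * Real.sqrt (a * b) < sub_f a b s x := by
  obtain ⟨hx0, hxs⟩ := hx
  have hsx : 0 < s - x := by linarith
  have hp : 0 < Real.sqrt x := Real.sqrt_pos.2 hx0
  have hq : 0 < Real.sqrt (s - x) := Real.sqrt_pos.2 hsx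
  set u := a * (Real.sqrt (s - x) / Real.sqrt x) with hud
  set v := b * (Real.sqrt x / Real.sqrt (s - x)) with hvd
  have hu : 0 < u := by positivity
  have hv : 0 < v := by positivity
  have huv : u * v = a * b := by
    rw [hud, hvd]
    field_simp
  have h1 : Real.sqrt (a * b) = Real.sqrt u * Real.sqrt v := by
    rw [← Real.sqrt_mul hu.le, huv]
  have hune : u ≠ v := by
    intro h
    apply hne
    have hpq : Real.sqrt (s - x) * Real.sqrt x ≠ 0 := by positivity
    have := h
    rw [hud, hvd] at this
    field_simp at this
    have hx2 : Real.sqrt x * Real.sqrt x = x := Real.mul_self_sqrt hx0.le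
    have hq2 : Real.sqrt (s - x) * Real.sqrt (s - x) = s - x := Real.mul_self_sqrt hsx.le
    nlinarith [this]
  have hsne : Real.sqrt u ≠ Real.sqrt v := by
    intro h
    apply hune
    have := congrArg (fun z => z ^ 2) h
    simpa [Real.sq_sqrt hu.le, Real.sq_sqrt hv.le] using this
  have key : 0 < (Real.sqrt u - Real.sqrt v) ^ 2 := by
    apply sq_pos_of_ne_zero
    exact sub_ne_zero_of_ne hsne
  have : sub_f a b s x = u + v := rfl
  rw [this, h1]
  nlinarith [Real.sq_sqrt hu.le, Real.sq_sqrt hv.le]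

lemma image_piece1 {a b s : ℝ} (ha : 0 < a) (hb : 0 < b) (hs : 0 < s) :
    sub_f a b s '' Ioo 0 (a * s / (a + b)) = Ioi (2 * Real.sqrt (a * b)) := by
  have hab : 0 < a + b := by linarith
  have hx0s : a * s / (a + b) < s := by
    rw [div_lt_iff₀ hab]
    nlinarith
  apply Subset.antisymm
  · rintro _ ⟨x, hx, rfl⟩
    have hxIoo : x ∈ Ioo 0 s := ⟨hx.1, hx.2.trans hx0s⟩
    apply sub_f_gt ha hb hxIoo
    have : x * (a + b) < a * s := by
      have := hx.2
      rw [lt_div_iff₀ hab] at this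
      linarith
    intro h
    nlinarith
  · intro y hy
    simp only [mem_Ioi] at hy
    have hab4 : 0 ≤ a * b := by positivity
    have hy0 : 0 < y := lt_of_le_of_lt (by positivity) hy
    have hy2 : 4 * a * b < y ^ 2 := by
      nlinarith [Real.sq_sqrt hab4, Real.sqrt_nonneg (a * b)]
    set E := Real.sqrt (y ^ 2 - 4 * a * b) with hEd
    have hE2 : E ^ 2 = y ^ 2 - 4 * a * b := Real.sq_sqrt (by linarith)
    have hE0 : 0 < E := Real.sqrt_pos.2 (by linarith)
    set r := (y + E) / (2 * a) with hrd
    have hr : 0 < r := by positivity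
    refine ⟨s / (1 + r ^ 2), ⟨(mem_Ioo_of_r hs hr).1, ?_⟩, ?_⟩
    · -- s/(1+r²) < a s/(a+b)  ⇔  a r² > b
      have harb : b < a * r ^ 2 := by
        rw [hrd]
        rw [div_pow, ← mul_div_assoc, lt_div_iff₀ (by positivity)]
        nlinarith [mul_pos hy0 hE0, sq_nonneg E, mul_pos ha (mul_pos hy0 hE0)]
      rw [div_lt_div_iff₀ (by positivity) hab]
      nlinarith
    · rw [sub_f_at hs hr]
      have hroot : a * r ^ 2 - y * r + b = 0 := by
        rw [hrd]
        field_simp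
        nlinarith
      field_simp
      nlinarith [hroot, hr]

lemma image_piece2 {a b s : ℝ} (ha : 0 < a) (hb : 0 < b) (hs : 0 < s) :
    sub_f a b s '' Ioo (a * s / (a + b)) s = Ioi (2 * Real.sqrt (a * b)) := by
  have hab : 0 < a + b := by linarith
  have hx00 : 0 < a * s / (a + b) := by positivity
  apply Subset.antisymm
  · rintro _ ⟨x, hx, rfl⟩
    have hxIoo : x ∈ Ioo 0 s := ⟨hx00.trans hx.1, hx.2⟩
    apply sub_f_gt ha hb hxIoo
    have : a * s < x * (a + b) := by
      have := hx.1
      rw [div_lt_iff₀ hab] at this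
      linarith
    intro h
    nlinarith
  · intro y hy
    simp only [mem_Ioi] at hy
    have hab4 : 0 ≤ a * b := by positivity
    have hy0 : 0 < y := lt_of_le_of_lt (by positivity) hy
    have hy2 : 4 * a * b < y ^ 2 := by
      nlinarith [Real.sq_sqrt hab4, Real.sqrt_nonneg (a * b)]
    set E := Real.sqrt (y ^ 2 - 4 * a * b) with hEd
    have hE2 : E ^ 2 = y ^ 2 - 4 * a * b := Real.sq_sqrt (by linarith)
    have hE0 : 0 < E := Real.sqrt_pos.2 (by linarith)
    have hEy : E < y := by nlinarith
    set r := (y - E) / (2 * a) with hrd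
    have hr : 0 < r := by
      rw [hrd]
      apply div_pos (by linarith) (by positivity)
    refine ⟨s / (1 + r ^ 2), ⟨?_, (mem_Ioo_of_r hs hr).2⟩, ?_⟩
    · -- a s/(a+b) < s/(1+r²)  ⇔  a r² < b
      have harb : a * r ^ 2 < b := by
        rw [hrd]
        rw [div_pow, ← mul_div_assoc, div_lt_iff₀ (by positivity)]
        nlinarith [mul_pos hE0 (sub_pos.2 hEy), mul_pos ha (mul_pos hE0 (sub_pos.2 hEy))]
      rw [div_lt_div_iff₀ hab (by positivity)]
      nlinarith
    · rw [sub_f_at hs hr]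
      have hroot : a * r ^ 2 - y * r + b = 0 := by
        rw [hrd]
        field_simp
        nlinarith
      field_simp
      nlinarith [hroot, hr]

noncomputable def Gg (c s y : ℝ) : ℝ := (2/s) * Real.exp (-(y^2 + c^2)/(2*s))

lemma Gg_integrable {c s : ℝ} (hs : 0 < s) (I : Set ℝ) :
    IntegrableOn (Gg c s) I := by
  apply Integrable.integrableOn
  unfold Gg
  apply Integrable.const_mul
  have : (fun y : ℝ => Real.exp (-(y^2 + c^2)/(2*s))) =
      fun y : ℝ => Real.exp (-c^2/(2*s)) * Real.exp (-(1/(2*s)) * y^2) := by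
    funext y
    rw [← Real.exp_add]
    congr 1
    field_simp
    ring
  rw [this]
  exact (integrable_exp_neg_mul_sq (by positivity)).const_mul _

lemma abs_deriv_smul_eq {a c s : ℝ} (hs : 0 < s) {x : ℝ} (hx : x ∈ Ioo 0 s)
    (hpos : 0 < Af a s x - Bf c s x) :
    |(-(s/2) * (Af a s x - Bf c s x))| • Gg (a - c) s (sub_f a c s x) =
      (Af a s x - Bf c s x) * Ef a c s x := by
  have hx0 := hx.1
  have hsx : 0 < s - x := by linarith [hx.2]
  rw [abs_of_nonpos (by nlinarith), smul_eq_mul]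
  have hG : Gg (a - c) s (sub_f a c s x) = (2/s) * Ef a c s x := by
    unfold Gg Ef
    congr 1
    congr 1
    rw [sub_f_sq hx]
    field_simp
    ring
  rw [hG]
  field_simp

/-- value and integrability via the anti-monotone substitution -/
lemma subst_anti {a c s : ℝ} {D : Set ℝ} {I : Set ℝ} (hD : MeasurableSet D)
    (hDconv : Convex ℝ D) (hDs : D ⊆ Ioo 0 s)
    (hmono : ∀ x ∈ D, 0 < Af a s x - Bf c s x)
    (himg : sub_f a c s '' D = I) (hs : 0 < s) :
    (∫ x in D, (Af a s x - Bf c s x) * Ef a c s x) = (∫ y in I, Gg (a - c) s y) ∧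
      IntegrableOn (fun x => (Af a s x - Bf c s x) * Ef a c s x) D := by
  have hderiv : ∀ x ∈ D, HasDerivWithinAt (sub_f a c s)
      (-(s/2) * (Af a s x - Bf c s x)) D x :=
    fun x hx => (hasDerivAt_sub_f (hDs hx)).hasDerivWithinAt
  have hinj : InjOn (sub_f a c s) D :=
    (sub_f_strictAntiOn hDconv hDs hmono).injOn
  have key := integral_image_eq_integral_abs_deriv_smul hD hderiv hinj (Gg (a - c) s)
  have keyInt := (integrableOn_image_iff_integrableOn_abs_deriv_smul hD hderiv hinj
    (Gg (a - c) s)).1 (Gg_integrable hs _)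
  have hcongr : EqOn (fun x => |(-(s/2) * (Af a s x - Bf c s x))| • Gg (a - c) s (sub_f a c s x))
      (fun x => (Af a s x - Bf c s x) * Ef a c s x) D :=
    fun x hx => abs_deriv_smul_eq hs (hDs hx) (hmono x hx)
  constructor
  · rw [← himg, key, setIntegral_congr_fun hD hcongr]
  · exact (keyInt.congr_fun hcongr hD)

lemma abs_deriv_smul_eq' {a c s : ℝ} (hs : 0 < s) {x : ℝ} (hx : x ∈ Ioo 0 s)
    (hneg : Af a s x - Bf c s x < 0) :
    |(-(s/2) * (Af a s x - Bf c s x))| • Gg (a - c) s (sub_f a c s x) =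
      (Bf c s x - Af a s x) * Ef a c s x := by
  have hx0 := hx.1
  have hsx : 0 < s - x := by linarith [hx.2]
  rw [abs_of_nonneg (by nlinarith), smul_eq_mul]
  have hG : Gg (a - c) s (sub_f a c s x) = (2/s) * Ef a c s x := by
    unfold Gg Ef
    congr 1
    congr 1
    rw [sub_f_sq hx]
    field_simp
    ring
  rw [hG]
  field_simp
  ring

lemma subst_mono {a c s : ℝ} {D : Set ℝ} {I : Set ℝ} (hD : MeasurableSet D)
    (hDconv : Convex ℝ D) (hDs : D ⊆ Ioo 0 s)
    (hmono : ∀ x ∈ D, Af a s x - Bf c s x < 0)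
    (himg : sub_f a c s '' D = I) (hs : 0 < s) :
    (∫ x in D, (Bf c s x - Af a s x) * Ef a c s x) = (∫ y in I, Gg (a - c) s y) ∧
      IntegrableOn (fun x => (Bf c s x - Af a s x) * Ef a c s x) D := by
  have hderiv : ∀ x ∈ D, HasDerivWithinAt (sub_f a c s)
      (-(s/2) * (Af a s x - Bf c s x)) D x :=
    fun x hx => (hasDerivAt_sub_f (hDs hx)).hasDerivWithinAt
  have hinj : InjOn (sub_f a c s) D :=
    (sub_f_strictMonoOn hDconv hDs hmono).injOn
  have key := integral_image_eq_integral_abs_deriv_smul hD hderiv hinj (Gg (a - c) s)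
  have keyInt := (integrableOn_image_iff_integrableOn_abs_deriv_smul hD hderiv hinj
    (Gg (a - c) s)).1 (Gg_integrable hs _)
  have hcongr : EqOn (fun x => |(-(s/2) * (Af a s x - Bf c s x))| • Gg (a - c) s (sub_f a c s x))
      (fun x => (Bf c s x - Af a s x) * Ef a c s x) D :=
    fun x hx => abs_deriv_smul_eq' hs (hDs hx) (hmono x hx)
  constructor
  · rw [← himg, key, setIntegral_congr_fun hD hcongr]
  · exact (keyInt.congr_fun hcongr hD)

lemma Gg_decomp {c s : ℝ} (hs : 0 < s) : Gg c s =
    fun y : ℝ => (2/s) * Real.exp (-c^2/(2*s)) * Real.exp (-(1/(2*s)) * y^2) := by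
  funext y
  unfold Gg
  rw [mul_assoc, ← Real.exp_add]
  congr 2
  field_simp
  ring

lemma Gg_int_univ {c s : ℝ} (hs : 0 < s) :
    (∫ y, Gg c s y) = 2 * Real.sqrt (2*Real.pi) * (Real.sqrt s)⁻¹ * Real.exp (-c^2/(2*s)) := by
  rw [Gg_decomp hs]
  rw [MeasureTheory.integral_const_mul, integral_gaussian]
  have h1 : Real.pi / (1/(2*s)) = (2*Real.pi) * s := by field_simp
  rw [h1, Real.sqrt_mul (by positivity)]
  have hss : Real.sqrt s > 0 := Real.sqrt_pos.2 hs
  have hs2 : Real.sqrt s * Real.sqrt s = s := Real.mul_self_sqrt hs.le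
  field_simp
  linear_combination hs2

lemma Gg_int_Ioi {c s : ℝ} (hs : 0 < s) :
    (∫ y in Ioi 0, Gg c s y) = Real.sqrt (2*Real.pi) * (Real.sqrt s)⁻¹ * Real.exp (-c^2/(2*s)) := by
  rw [Gg_decomp hs]
  rw [MeasureTheory.integral_const_mul, integral_gaussian_Ioi]
  have h1 : Real.pi / (1/(2*s)) = (2*Real.pi) * s := by field_simp
  rw [h1, Real.sqrt_mul (by positivity)]
  have hss : Real.sqrt s > 0 := Real.sqrt_pos.2 hs
  have hs2 : Real.sqrt s * Real.sqrt s = s := Real.mul_self_sqrt hs.le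
  field_simp
  linear_combination hs2

lemma Af_pos {a s x : ℝ} (ha : 0 < a) (hx : x ∈ Ioo 0 s) : 0 < Af a s x := by
  have h1 : 0 < Real.sqrt x := Real.sqrt_pos.2 hx.1
  have h2 : 0 < Real.sqrt (s - x) := Real.sqrt_pos.2 (by linarith [hx.2, hx.1])
  unfold Af
  have := hx.1
  positivity

lemma Bf_neg_eq {b s x : ℝ} : Bf (-b) s x = -Bf b s x := by
  unfold Bf
  rw [neg_div]

lemma Ef_neg_eq {a b s x : ℝ} : Ef a (-b) s x = Ef a b s x := by
  unfold Ef
  rw [neg_pow]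
  norm_num

lemma C_zero {a s : ℝ} (ha : 0 < a) (hs : 0 < s) :
    ((∫ x in Ioo 0 s, Af a s x * Ef a 0 s x) =
      Real.sqrt (2*Real.pi) * (Real.sqrt s)⁻¹ * Real.exp (-a^2/(2*s))) ∧
      IntegrableOn (fun x => Af a s x * Ef a 0 s x) (Ioo 0 s) := by
  have hB0 : ∀ x, Bf 0 s x = 0 := by intro x; unfold Bf; simp
  have hmono : ∀ x ∈ Ioo 0 s, 0 < Af a s x - Bf 0 s x := by
    intro x hx; rw [hB0]; simpa using Af_pos ha hx
  have h := subst_anti (a := a) (c := 0) measurableSet_Ioo (convex_Ioo 0 s)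
    (subset_refl _) hmono (image_sub_f_zero ha hs) hs
  have heq : (fun x => (Af a s x - Bf 0 s x) * Ef a 0 s x) =
      fun x => Af a s x * Ef a 0 s x := by
    funext x; rw [hB0]; ring
  rw [heq] at h
  obtain ⟨h1, h2⟩ := h
  refine ⟨?_, h2⟩
  rw [h1, Gg_int_Ioi hs]
  norm_num

lemma C_sum {a b s : ℝ} (ha : 0 < a) (hb : 0 < b) (hs : 0 < s) :
    ((∫ x in Ioo 0 s, (Af a s x + Bf b s x) * Ef a b s x) =
      2 * Real.sqrt (2*Real.pi) * (Real.sqrt s)⁻¹ * Real.exp (-(a+b)^2/(2*s))) ∧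
      IntegrableOn (fun x => (Af a s x + Bf b s x) * Ef a b s x) (Ioo 0 s) := by
  have hBpos : ∀ x ∈ Ioo 0 s, 0 < Bf b s x := by
    intro x hx
    have h1 : 0 < Real.sqrt x := Real.sqrt_pos.2 hx.1
    have h2 : 0 < Real.sqrt (s - x) := Real.sqrt_pos.2 (by linarith [hx.2, hx.1])
    have h3 : 0 < s - x := by linarith [hx.2, hx.1]
    unfold Bf
    positivity
  have hmono : ∀ x ∈ Ioo 0 s, 0 < Af a s x - Bf (-b) s x := by
    intro x hx
    rw [Bf_neg_eq]
    have := Af_pos ha hx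
    have := hBpos x hx
    linarith
  have h := subst_anti (a := a) (c := -b) measurableSet_Ioo (convex_Ioo 0 s)
    (subset_refl _) hmono (image_sub_f_neg ha hb hs) hs
  have heq : (fun x => (Af a s x - Bf (-b) s x) * Ef a (-b) s x) =
      fun x => (Af a s x + Bf b s x) * Ef a b s x := by
    funext x; rw [Bf_neg_eq, Ef_neg_eq]; ring
  rw [heq] at h
  obtain ⟨h1, h2⟩ := h
  refine ⟨?_, h2⟩
  rw [h1, show a - -b = a + b by ring,
    MeasureTheory.setIntegral_univ, Gg_int_univ hs]

lemma AB_sign {a b s x : ℝ} (hx : x ∈ Ioo 0 s) :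
    Af a s x - Bf b s x = (a * (s - x) - b * x) /
      (x * (s - x) * (Real.sqrt x * Real.sqrt (s - x))) := by
  have hx0 := hx.1
  have hsx : 0 < s - x := by linarith [hx.2]
  have h1 : 0 < Real.sqrt x := Real.sqrt_pos.2 hx0
  have h2 : 0 < Real.sqrt (s - x) := Real.sqrt_pos.2 hsx
  unfold Af Bf
  field_simp

lemma C_diff {a b s : ℝ} (ha : 0 < a) (hb : 0 < b) (hs : 0 < s) :
    ((∫ x in Ioo 0 s, (Af a s x - Bf b s x) * Ef a b s x) = 0) ∧
      IntegrableOn (fun x => (Af a s x - Bf b s x) * Ef a b s x) (Ioo 0 s) := by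
  have hab : 0 < a + b := by linarith
  set x₀ := a * s / (a + b) with hx₀d
  have hx₀0 : 0 < x₀ := by positivity
  have hx₀s : x₀ < s := by
    rw [hx₀d, div_lt_iff₀ hab]
    nlinarith
  have hsub1 : Ioo 0 x₀ ⊆ Ioo 0 s := Ioo_subset_Ioo le_rfl hx₀s.le
  have hsub2 : Ioo x₀ s ⊆ Ioo 0 s := Ioo_subset_Ioo hx₀0.le le_rfl
  have hpos1 : ∀ x ∈ Ioo 0 x₀, 0 < Af a s x - Bf b s x := by
    intro x hx
    rw [AB_sign (hsub1 hx)]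
    have hx0 := hx.1
    have hxs : x < s := hx.2.trans hx₀s
    have hsx : 0 < s - x := by linarith
    have h1 : 0 < Real.sqrt x := Real.sqrt_pos.2 hx0
    have h2 : 0 < Real.sqrt (s - x) := Real.sqrt_pos.2 hsx
    apply div_pos _ (by positivity)
    have := hx.2
    rw [hx₀d, lt_div_iff₀ hab] at this
    nlinarith
  have hneg2 : ∀ x ∈ Ioo x₀ s, Af a s x - Bf b s x < 0 := by
    intro x hx
    rw [AB_sign (hsub2 hx)]
    have hx0 : 0 < x := hx₀0.trans hx.1
    have hxs : x < s := hx.2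
    have hsx : 0 < s - x := by linarith
    have h1 : 0 < Real.sqrt x := Real.sqrt_pos.2 hx0
    have h2 : 0 < Real.sqrt (s - x) := Real.sqrt_pos.2 hsx
    apply div_neg_of_neg_of_pos _ (by positivity)
    have := hx.1
    rw [hx₀d, div_lt_iff₀ hab] at this
    nlinarith
  obtain ⟨hv1, hi1⟩ := subst_anti (a := a) (c := b) measurableSet_Ioo (convex_Ioo 0 x₀)
    hsub1 hpos1 (image_piece1 ha hb hs) hs
  obtain ⟨hv2, hi2⟩ := subst_mono (a := a) (c := b) measurableSet_Ioo (convex_Ioo x₀ s)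
    hsub2 hneg2 (image_piece2 ha hb hs) hs
  -- integrability of (Af - Bf) * Ef on the second piece
  have hi2' : IntegrableOn (fun x => (Af a s x - Bf b s x) * Ef a b s x) (Ioo x₀ s) := by
    have := hi2.neg
    apply MeasureTheory.IntegrableOn.congr_fun this _ measurableSet_Ioo
    intro x _
    simp only [Pi.neg_apply]
    ring
  have hv2' : (∫ x in Ioo x₀ s, (Af a s x - Bf b s x) * Ef a b s x) =
      -∫ y in Ioi (2 * Real.sqrt (a*b)), Gg (a - b) s y := by
    rw [← hv2, ← MeasureTheory.integral_neg]
    apply setIntegral_congr_fun measurableSet_Ioo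
    intro x _
    simp only [Pi.neg_apply]
    ring
  -- split the interval
  have hunion : Ioo 0 x₀ ∪ Ico x₀ s = Ioo 0 s := Ioo_union_Ico_eq_Ioo hx₀0 hx₀s.le
  have hi2'' : IntegrableOn (fun x => (Af a s x - Bf b s x) * Ef a b s x) (Ico x₀ s) := by
    apply hi2'.congr_set_ae
    exact (MeasureTheory.Ioo_ae_eq_Ico).symm
  have hdisj : Disjoint (Ioo 0 x₀) (Ico x₀ s) := by
    apply Set.disjoint_left.2
    rintro x hx1 hx2
    exact absurd hx2.1 (not_le.2 hx1.2)
  have hsplit := MeasureTheory.setIntegral_union hdisj measurableSet_Ico hi1 hi2''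
  constructor
  · rw [← hunion, hsplit, MeasureTheory.integral_Ico_eq_integral_Ioo, hv1, hv2']
    ring
  · rw [← hunion]
    exact hi1.union hi2''

/-- The main core identity at the `Af/Ef` level. -/
lemma C_main {a b s : ℝ} (ha : 0 < a) (hb : 0 ≤ b) (hs : 0 < s) :
    ((∫ x in Ioo 0 s, Af a s x * Ef a b s x) =
      Real.sqrt (2*Real.pi) * (Real.sqrt s)⁻¹ * Real.exp (-(a+b)^2/(2*s))) ∧
      IntegrableOn (fun x => Af a s x * Ef a b s x) (Ioo 0 s) := by
  rcases eq_or_lt_of_le hb with hb0 | hbpos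
  · obtain ⟨h1, h2⟩ := C_zero ha hs
    rw [← hb0]
    constructor
    · rw [h1]
      norm_num
    · exact h2
  · obtain ⟨hs1, hi1⟩ := C_sum ha hbpos hs
    obtain ⟨hd1, hi2⟩ := C_diff ha hbpos hs
    have heq : (fun x => Af a s x * Ef a b s x) = fun x =>
        (1/2 : ℝ) * (((Af a s x + Bf b s x) * Ef a b s x) +
          ((Af a s x - Bf b s x) * Ef a b s x)) := by
      funext x; ring
    constructor
    · rw [heq]
      rw [MeasureTheory.integral_const_mul, MeasureTheory.integral_add hi1 hi2, hs1, hd1]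
      ring
    · rw [heq]
      exact (hi1.add hi2).const_mul _

lemma qf_nonneg (c x : ℝ) : 0 ≤ qf c x := by
  unfold qf
  positivity

lemma qf_zero {c x : ℝ} (hx : x ≤ 0) : qf c x = 0 := by
  unfold qf
  rw [Real.sqrt_eq_zero'.2 hx, inv_zero, zero_mul]

lemma lf_zero {a x : ℝ} (hx : x ≤ 0) : lf a x = 0 := by
  unfold lf
  rw [Real.sqrt_eq_zero'.2 hx, inv_zero, zero_mul, mul_zero, zero_mul]

lemma lf_nonneg {a : ℝ} (ha : 0 ≤ a) (x : ℝ) : 0 ≤ lf a x := by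
  rcases le_or_gt x 0 with hx | hx
  · rw [lf_zero hx]
  · unfold lf
    positivity

lemma qf_measurable (c : ℝ) : Measurable (qf c) := by
  unfold qf
  apply Measurable.mul
  · exact (Real.continuous_sqrt.measurable).inv
  · exact Real.measurable_exp.comp ((measurable_const).div
      ((measurable_const.mul measurable_id)))

lemma lf_measurable (a : ℝ) : Measurable (lf a) := by
  unfold lf
  apply Measurable.mul
  · exact measurable_const.mul
      (((Real.continuous_sqrt.measurable).inv).mul measurable_inv)
  · exact Real.measurable_exp.comp ((measurable_const).div
      ((measurable_const.mul measurable_id)))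

lemma C_real {a b s : ℝ} (ha : 0 < a) (hb : 0 ≤ b) (hs : 0 < s) :
    ((∫ x in Ioo 0 s, lf a x * qf b (s - x)) =
      Real.sqrt (2*Real.pi) * qf (a+b) s) ∧
      IntegrableOn (fun x => lf a x * qf b (s - x)) (Ioo 0 s) := by
  have heq : EqOn (fun x => Af a s x * Ef a b s x) (fun x => lf a x * qf b (s - x))
      (Ioo 0 s) := by
    intro x hx
    have hx0 := hx.1
    have hsx : 0 < s - x := by linarith [hx.2]
    have h1 : 0 < Real.sqrt x := Real.sqrt_pos.2 hx0
    have h2 : 0 < Real.sqrt (s - x) := Real.sqrt_pos.2 hsx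
    have hx2 : Real.sqrt x * Real.sqrt x = x := Real.mul_self_sqrt hx0.le
    simp only [Af, Ef, lf, qf]
    rw [show -a^2/(2*x) - b^2/(2*(s-x)) = (-a^2/(2*x)) + (-b^2/(2*(s-x))) by ring,
      Real.exp_add]
    field_simp
  obtain ⟨h1, h2⟩ := C_main ha hb hs
  constructor
  · rw [← setIntegral_congr_fun measurableSet_Ioo heq, h1]
    unfold qf
    ring
  · exact h2.congr_fun heq measurableSet_Ioo

noncomputable def Qe (c : ℝ) (x : ℝ) : ENNReal := ENNReal.ofReal (qf c x)
noncomputable def Le (a : ℝ) (x : ℝ) : ENNReal := ENNReal.ofReal (lf a x)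

lemma Qe_measurable (c : ℝ) : Measurable (Qe c) :=
  ENNReal.measurable_ofReal.comp (qf_measurable c)

lemma Le_measurable (a : ℝ) : Measurable (Le a) :=
  ENNReal.measurable_ofReal.comp (lf_measurable a)

lemma C_lin {a b : ℝ} (ha : 0 < a) (hb : 0 ≤ b) (u : ℝ) :
    (∫⁻ y, Le a y * Qe b (u - y)) =
      ENNReal.ofReal (Real.sqrt (2*Real.pi)) * Qe (a+b) u := by
  rcases le_or_gt u 0 with hu | hu
  · have hzero : ∀ y : ℝ, Le a y * Qe b (u - y) = 0 := by
      intro y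
      rcases le_or_gt y 0 with hy | hy
      · rw [show Le a y = 0 by simp [Le, lf_zero hy], zero_mul]
      · rw [show Qe b (u - y) = 0 by simp [Qe, qf_zero (by linarith : u - y ≤ 0)], mul_zero]
    simp_rw [hzero]
    rw [lintegral_zero, show Qe (a+b) u = 0 by simp [Qe, qf_zero hu], mul_zero]
  · have hind : (fun y => Le a y * Qe b (u - y)) =
        (Ioo (0:ℝ) u).indicator (fun y => Le a y * Qe b (u - y)) := by
      funext y
      rcases le_or_gt y 0 with hy | hy
      · rw [Set.indicator_of_notMem (by simp [hy, not_lt.2 hy] : y ∉ Ioo (0:ℝ) u),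
          show Le a y = 0 by simp [Le, lf_zero hy], zero_mul]
      · rcases lt_or_ge y u with hyu | hyu
        · rw [Set.indicator_of_mem (show y ∈ Ioo (0:ℝ) u from ⟨hy, hyu⟩)]
        · rw [Set.indicator_of_notMem (by simp [not_lt.2 hyu] : y ∉ Ioo (0:ℝ) u),
            show Qe b (u - y) = 0 by simp [Qe, qf_zero (by linarith : u - y ≤ 0)], mul_zero]
    rw [hind, lintegral_indicator measurableSet_Ioo]
    have hmul : ∀ y, Le a y * Qe b (u - y) = ENNReal.ofReal (lf a y * qf b (u - y)) := by
      intro y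
      rw [ENNReal.ofReal_mul (lf_nonneg ha.le y)]
      rfl
    simp_rw [hmul]
    obtain ⟨h1, h2⟩ := C_real ha hb hu
    rw [← MeasureTheory.ofReal_integral_eq_lintegral_ofReal h2
      (Filter.Eventually.of_forall (fun y => mul_nonneg (lf_nonneg ha.le y) (qf_nonneg _ _))),
      h1, ENNReal.ofReal_mul (Real.sqrt_nonneg _)]
    rfl

lemma main_lintegral {z₁ z₂ : ℝ} (h₁ : 0 < z₁) (h₂ : 0 < z₂) (t : ℝ) :
    (∫⁻ y, Qe z₁ y * Qe z₂ (t - y)) = ∫⁻ y, Qe 0 y * Qe (z₁ + z₂) (t - y) := by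
  set K : ENNReal := ENNReal.ofReal (Real.sqrt (2*Real.pi)) with hKd
  have hK0 : K ≠ 0 := by
    rw [hKd]
    simp only [ne_eq, ENNReal.ofReal_eq_zero, not_le]
    positivity
  have hKtop : K ≠ ⊤ := ENNReal.ofReal_ne_top
  have hmeas1 : Measurable (Function.uncurry fun y x =>
      Le z₁ x * Qe 0 (y - x) * Qe z₂ (t - y)) := by
    apply Measurable.fun_mul
    apply Measurable.fun_mul
    · exact (Le_measurable z₁).comp measurable_snd
    · exact (Qe_measurable 0).comp (measurable_fst.sub measurable_snd)
    · exact (Qe_measurable z₂).comp (measurable_const.sub measurable_fst)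
  have hmeas2 : Measurable (Function.uncurry fun x y =>
      Le z₁ x * Qe 0 y * Qe z₂ (t - x - y)) := by
    apply Measurable.fun_mul
    apply Measurable.fun_mul
    · exact (Le_measurable z₁).comp measurable_fst
    · exact (Qe_measurable 0).comp measurable_snd
    · exact (Qe_measurable z₂).comp
        ((measurable_const.sub measurable_fst).sub measurable_snd)
  apply ENNReal.mul_right_strictMono hK0 hKtop |>.injective
  calc K * ∫⁻ y, Qe z₁ y * Qe z₂ (t - y)
      = ∫⁻ y, (K * Qe z₁ y) * Qe z₂ (t - y) := by
        rw [← lintegral_const_mul' K _ hKtop]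
        congr 1
        funext y
        ring
    _ = ∫⁻ y, (∫⁻ x, Le z₁ x * Qe 0 (y - x)) * Qe z₂ (t - y) := by
        congr 1
        funext y
        rw [show K * Qe z₁ y = K * Qe (z₁ + 0) y by rw [add_zero],
          ← C_lin h₁ le_rfl y]
    _ = ∫⁻ y, ∫⁻ x, Le z₁ x * Qe 0 (y - x) * Qe z₂ (t - y) := by
        congr 1
        funext y
        exact (lintegral_mul_const' _ _
          (show Qe z₂ (t - y) ≠ ⊤ from ENNReal.ofReal_ne_top)).symm
    _ = ∫⁻ x, ∫⁻ y, Le z₁ x * Qe 0 (y - x) * Qe z₂ (t - y) := by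
        exact lintegral_lintegral_swap hmeas1.aemeasurable
    _ = ∫⁻ x, Le z₁ x * ∫⁻ y, Qe 0 (y - x) * Qe z₂ (t - y) := by
        congr 1
        funext x
        rw [← lintegral_const_mul' _ _ (show Le z₁ x ≠ ⊤ from ENNReal.ofReal_ne_top)]
        congr 1
        funext y
        ring
    _ = ∫⁻ x, Le z₁ x * ∫⁻ y, Qe 0 y * Qe z₂ (t - x - y) := by
        congr 1
        funext x
        congr 1
        calc (∫⁻ y, Qe 0 (y - x) * Qe z₂ (t - y))
            = ∫⁻ y, Qe 0 ((y + x) - x) * Qe z₂ (t - (y + x)) := by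
              exact (lintegral_add_right_eq_self
                (fun y => Qe 0 (y - x) * Qe z₂ (t - y)) x).symm
          _ = ∫⁻ y, Qe 0 y * Qe z₂ (t - x - y) := by
              congr 1
              funext y
              rw [add_sub_cancel_right]
              congr 2
              ring
    _ = ∫⁻ x, ∫⁻ y, Le z₁ x * Qe 0 y * Qe z₂ (t - x - y) := by
        congr 1
        funext x
        rw [← lintegral_const_mul' _ _ (show Le z₁ x ≠ ⊤ from ENNReal.ofReal_ne_top)]
        congr 1
        funext y
        ring
    _ = ∫⁻ y, ∫⁻ x, Le z₁ x * Qe 0 y * Qe z₂ (t - x - y) := by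
        exact lintegral_lintegral_swap hmeas2.aemeasurable
    _ = ∫⁻ y, Qe 0 y * ∫⁻ x, Le z₁ x * Qe z₂ ((t - y) - x) := by
        congr 1
        funext y
        rw [← lintegral_const_mul' _ _ (show Qe 0 y ≠ ⊤ from ENNReal.ofReal_ne_top)]
        congr 1
        funext x
        rw [show t - x - y = t - y - x by ring]
        ring
    _ = ∫⁻ y, Qe 0 y * (K * Qe (z₁ + z₂) (t - y)) := by
        congr 1
        funext y
        rw [C_lin h₁ h₂.le (t - y)]
    _ = K * ∫⁻ y, Qe 0 y * Qe (z₁ + z₂) (t - y) := by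
        rw [← lintegral_const_mul' K _ hKtop]
        congr 1
        funext y
        ring

lemma gig_prod {z z' t x : ℝ} (hx : x ∈ Ioo 0 t) :
    gigPlus z x * gigPlus z' (t - x) =
      (Real.exp (z + z') / (2*Real.pi) * Real.exp (-t/2)) * (qf z x * qf z' (t - x)) := by
  obtain ⟨hx0, hxt⟩ := hx
  have htx : 0 < t - x := by linarith
  have e1 : x ^ (-(1:ℝ)/2) = (Real.sqrt x)⁻¹ := by
    rw [show -(1:ℝ)/2 = -(1/2) by norm_num, Real.rpow_neg hx0.le, ← Real.sqrt_eq_rpow]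
  have e2 : (t - x) ^ (-(1:ℝ)/2) = (Real.sqrt (t - x))⁻¹ := by
    rw [show -(1:ℝ)/2 = -(1/2) by norm_num, Real.rpow_neg htx.le, ← Real.sqrt_eq_rpow]
  unfold gigPlus qf
  rw [e1, e2]
  rw [show -z^2/(2*x) - x/2 = (-z^2/(2*x)) + (-(x/2)) by ring, Real.exp_add,
      show -z'^2/(2*(t-x)) - (t-x)/2 = (-z'^2/(2*(t-x))) + (-((t-x)/2)) by ring,
      Real.exp_add]
  have h2pi : Real.sqrt (2*Real.pi) * Real.sqrt (2*Real.pi) = 2*Real.pi :=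
    Real.mul_self_sqrt (by positivity)
  have hexp : Real.exp (-(x/2)) * Real.exp (-((t-x)/2)) = Real.exp (-t/2) := by
    rw [← Real.exp_add]; congr 1; ring
  have hexps : Real.exp z * Real.exp z' = Real.exp (z+z') := (Real.exp_add _ _).symm
  have h2pi' : (Real.sqrt (2*Real.pi))⁻¹ * (Real.sqrt (2*Real.pi))⁻¹ = (2*Real.pi)⁻¹ := by
    rw [← mul_inv, h2pi]
  rw [← hexps, ← hexp,
    show Real.exp z * Real.exp z' / (2*Real.pi) = Real.exp z * Real.exp z' *
      ((Real.sqrt (2*Real.pi))⁻¹ * (Real.sqrt (2*Real.pi))⁻¹) by rw [h2pi']; ring]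
  ring

lemma set_to_lin {c c' t : ℝ} (ht : 0 < t) :
    (∫ x in Ioo 0 t, qf c x * qf c' (t - x)) =
      (∫⁻ y, Qe c y * Qe c' (t - y)).toReal := by
  have key := MeasureTheory.integral_eq_lintegral_of_nonneg_ae
    (μ := volume.restrict (Ioo 0 t)) (f := fun x => qf c x * qf c' (t - x))
    (Filter.Eventually.of_forall (fun y => mul_nonneg (qf_nonneg _ _) (qf_nonneg _ _)))
    (((qf_measurable c).mul ((qf_measurable c').comp
      (measurable_const.sub measurable_id))).aestronglyMeasurable)
  rw [key]
  congr 1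
  have hmul : ∀ y : ℝ, ENNReal.ofReal (qf c y * qf c' (t - y)) = Qe c y * Qe c' (t - y) := by
    intro y
    rw [ENNReal.ofReal_mul (qf_nonneg _ _)]
    rfl
  simp_rw [hmul]
  have hind : (fun y => Qe c y * Qe c' (t - y)) =
      (Ioo (0:ℝ) t).indicator (fun y => Qe c y * Qe c' (t - y)) := by
    funext y
    rcases le_or_gt y 0 with hy | hy
    · rw [Set.indicator_of_notMem (by simp [not_lt.2 hy] : y ∉ Ioo (0:ℝ) t),
        show Qe c y = 0 by simp [Qe, qf_zero hy], zero_mul]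
    · rcases lt_or_ge y t with hyt | hyt
      · rw [Set.indicator_of_mem (show y ∈ Ioo (0:ℝ) t from ⟨hy, hyt⟩)]
      · rw [Set.indicator_of_notMem (by simp [not_lt.2 hyt] : y ∉ Ioo (0:ℝ) t),
          show Qe c' (t - y) = 0 by simp [Qe, qf_zero (by linarith : t - y ≤ 0)], mul_zero]
  rw [← lintegral_indicator measurableSet_Ioo, ← hind]

theorem stmt_4 (z₁ z₂ t : ℝ) (hz₁ : 0 < z₁) (hz₂ : 0 < z₂) (ht : 0 < t) :
    ∫ x in (0 : ℝ)..t, gigPlus z₁ x * gigPlus z₂ (t - x) =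
    ∫ x in (0 : ℝ)..t, gigPlus 0 x * gigPlus (z₁ + z₂) (t - x) := by
  rw [intervalIntegral.integral_of_le ht.le, intervalIntegral.integral_of_le ht.le,
      MeasureTheory.integral_Ioc_eq_integral_Ioo, MeasureTheory.integral_Ioc_eq_integral_Ioo,
      setIntegral_congr_fun measurableSet_Ioo
        (fun x hx => gig_prod (z := z₁) (z' := z₂) hx),
      setIntegral_congr_fun measurableSet_Ioo
        (fun x hx => gig_prod (z := 0) (z' := z₁ + z₂) hx),
      MeasureTheory.integral_const_mul, MeasureTheory.integral_const_mul, zero_add]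
  congr 1
  rw [set_to_lin ht, set_to_lin ht, main_lintegral hz₁ hz₂ t]
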